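/- For h > 0, the polynomial f(z,h,1) := z⁴ − 3z³(1+h) + 3z²(h²−7h+1) − z(1+h)³ (the quartic q at γ=1) satisfies f(z,h,1) = z·(z³ − 3(1+h)z² + 3(h²−7h+1)z − (1+h)³), and its unique positive real root is z = (1 + h^{1/3})³, i.e., f((1+h^{1/3})³, h, 1) = 0. -/
import Mathlib


noncomputable def f1 (h z : ℝ) : ℝ :=
  z^4 - 3 * z^3 * (1 + h) + 3 * z^2 * (h^2 - 7 * h + 1) - z * (1 + h)^3

theorem f1_factor_and_root (h : ℝ) (hh : 0 < h) :
    (∀ z : ℝ, f1 h z = z * (z^3 - 3 * (1 + h) * z^2 + 3 * (h^2 - 7 * h + 1) * z - (1 + h)^3)) ∧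
    f1 h ((1 + h ^ ((1:ℝ)/3))^3) = 0 ∧
    (∀ z : ℝ, 0 < z → f1 h z = 0 → z = (1 + h ^ ((1:ℝ)/3))^3) := by
  set t : ℝ := h ^ ((1:ℝ)/3) with ht_def
  have ht : 0 < t := Real.rpow_pos_of_pos hh _
  have ht3 : t ^ 3 = h := by
    rw [ht_def, ← Real.rpow_natCast (h ^ ((1:ℝ)/3)) 3, ← Real.rpow_mul hh.le]
    norm_num
  refine ⟨fun z => by unfold f1; ring, ?_, ?_⟩
  · unfold f1; rw [← ht3]; ring
  · intro z hz hzero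
    have key : z * ((z - (1+t)^3) * (z^2 + (-2 + 3*t + 3*t^2 - 2*t^3) * z
        + (1 - 3*t + 6*t^2 - 7*t^3 + 6*t^4 - 3*t^5 + t^6))) = 0 := by
      rw [← hzero]; unfold f1; rw [← ht3]; ring
    have hq : 0 < z^2 + (-2 + 3*t + 3*t^2 - 2*t^3) * z
        + (1 - 3*t + 6*t^2 - 7*t^3 + 6*t^4 - 3*t^5 + t^6) := by
      nlinarith [sq_nonneg (2*z + (-2 + 3*t + 3*t^2 - 2*t^3)), sq_nonneg (t*(t-1)),
        sq_nonneg (t-1), mul_pos hz ht, mul_pos hz hz, sq_nonneg (z*(t-1))]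
    rcases mul_eq_zero.mp key with h1 | h2
    · exact absurd h1 hz.ne'
    · rcases mul_eq_zero.mp h2 with h3 | h4
      · linarith [sub_eq_zero.mp h3]
      · exact absurd h4 hq.ne'
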